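/- arXiv:2310.08223 — 3 statements merged into one kernel-verified Lean document; each statement's English description precedes it below -/
import Mathlib

section
/- Let 0 < ρ < 1 and μ, γ > 0 constants, and σ_n defined by σ_n = (2|n|ρ^{|n|} + (μ n² + γ ρ^{2|n|})(1 + ρ^{2|n|})) / (2|n|ρ^{|n|} + (μ n² + γ ρ^{2|n|})(1 − ρ^{2|n|})). Then there exists a constant C > 0, depending only on μ, γ, ρ, such that |σ_n − 1|² · |n| ≤ C · |n| · ρ^{4|n|} for all nonzero integers n. -/
/-- The Fourier multiplier of the DtN map for a circular inclusion of radius `ρ`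
with constant boundary coefficients `μ, γ`. -/
noncomputable def sigmaMult (ρ μ γ : ℝ) (n : ℤ) : ℝ :=
  (2 * (n.natAbs : ℝ) * ρ ^ n.natAbs
      + (μ * (n : ℝ) ^ 2 + γ * ρ ^ (2 * n.natAbs)) * (1 + ρ ^ (2 * n.natAbs)))
    / (2 * (n.natAbs : ℝ) * ρ ^ n.natAbs
      + (μ * (n : ℝ) ^ 2 + γ * ρ ^ (2 * n.natAbs)) * (1 - ρ ^ (2 * n.natAbs)))

/-- there is a constant `C > 0`, depending only on `μ, γ, ρ`, such that
`|σ_n − 1|² |n| ≤ C |n| ρ^{4|n|}` for all nonzero integers `n`. -/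
theorem sigma_sub_one_sq_bound (ρ μ γ : ℝ) (hρ0 : 0 < ρ) (hρ1 : ρ < 1)
    (hμ : 0 < μ) (hγ : 0 < γ) :
    ∃ C > 0, ∀ n : ℤ, n ≠ 0 →
      |sigmaMult ρ μ γ n - 1| ^ 2 * (n.natAbs : ℝ)
        ≤ C * (n.natAbs : ℝ) * ρ ^ (4 * n.natAbs) := by
  have h1 : 0 < 1 - ρ ^ 2 := by nlinarith
  refine ⟨4 / (1 - ρ ^ 2) ^ 2, by positivity, ?_⟩
  intro n hn
  set k := n.natAbs with hkdef
  have hk1 : 1 ≤ k := Int.natAbs_pos.mpr hn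
  have hnR : ((n : ℝ)) ≠ 0 := Int.cast_ne_zero.mpr hn
  set A : ℝ := μ * (n : ℝ) ^ 2 + γ * ρ ^ (2 * k) with hAdef
  have hA : 0 < A := by positivity
  set E : ℝ := ρ ^ (2 * k) with hEdef
  have hE0 : 0 < E := by positivity
  have hE1 : E ≤ ρ ^ 2 := by
    rw [hEdef]
    exact pow_le_pow_of_le_one hρ0.le hρ1.le (by omega)
  set D : ℝ := 2 * (k : ℝ) * ρ ^ k + A * (1 - E) with hDdef
  have hkR : (0 : ℝ) ≤ (k : ℝ) := Nat.cast_nonneg k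
  have hDge : A * (1 - ρ ^ 2) ≤ D := by
    have h2 : 0 ≤ 2 * (k : ℝ) * ρ ^ k := by positivity
    nlinarith [mul_le_mul_of_nonneg_left hE1 hA.le]
  have hD : 0 < D := lt_of_lt_of_le (by positivity) hDge
  have hσ : sigmaMult ρ μ γ n - 1 = 2 * A * E / D := by
    rw [sigmaMult, ← hkdef, ← hAdef, ← hEdef, ← hDdef, div_sub_one hD.ne']
    rw [hDdef]; ring_nf
  have habs : |sigmaMult ρ μ γ n - 1| = 2 * A * E / D := by
    rw [hσ, abs_of_nonneg (by positivity)]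
  have hbd : 2 * A * E / D ≤ 2 * E / (1 - ρ ^ 2) := by
    rw [div_le_div_iff₀ hD h1]
    nlinarith [mul_le_mul_of_nonneg_left hDge (mul_pos (mul_pos two_pos hA) hE0).le,
      mul_pos hA h1]
  have hEsq : E ^ 2 = ρ ^ (4 * k) := by
    rw [hEdef, ← pow_mul]; congr 1; ring
  rw [habs]
  have h2 : (2 * A * E / D) ^ 2 ≤ (2 * E / (1 - ρ ^ 2)) ^ 2 :=
    pow_le_pow_left₀ (by positivity) hbd 2
  calc (2 * A * E / D) ^ 2 * (k : ℝ) ≤ (2 * E / (1 - ρ ^ 2)) ^ 2 * (k : ℝ) := by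
        exact mul_le_mul_of_nonneg_right h2 hkR
    _ = 4 / (1 - ρ ^ 2) ^ 2 * (k : ℝ) * ρ ^ (4 * k) := by
        rw [← hEsq]; field_simp; ring
end

section
/- Let T be the multiplier operator on periodic Sobolev spaces defined by (Tf)(θ) = σ₀ f₀ + Σ_{n≠0} |n|(σ_n − 1) f_n e^{inθ}, where σ_n − 1 satisfies |σ_n − 1| ≤ C ρ^{2|n|} for some C > 0 and ρ ∈ (0,1), and σ₀ ∈ ℝ. Then T is a compact operator from H^{1/2}_{per}[0,2π] to H^{−1/2}_{per}[0,2π]; indeed T maps H^{1/2}_{per} boundedly into H^{s}_{per} for every s, and the finite-rank truncations converge to T in operator norm. -/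
open Complex

noncomputable section DiagHelpers

namespace DiagHelpers

local notation "H" => lp (fun _ : ℤ => ℂ) 2

lemma htwo : (0:ℝ) < (2 : ENNReal).toReal := by norm_num

lemma diag_mem (d : ℤ → ℂ) {M : ℝ} (hd : ∀ n, ‖d n‖ ≤ M) (f : H) :
    Memℓp (fun n => d n * (f : ∀ _ : ℤ, ℂ) n) 2 := by
  apply memℓp_gen
  have hs := ((lp.memℓp f).summable htwo).mul_left (M ^ (2 : ENNReal).toReal)
  refine hs.of_nonneg_of_le (fun n => Real.rpow_nonneg (norm_nonneg _) _) (fun n => ?_)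
  calc ‖d n * (f : ∀ _ : ℤ, ℂ) n‖ ^ (2 : ENNReal).toReal
      = (‖d n‖ * ‖(f : ∀ _ : ℤ, ℂ) n‖) ^ (2 : ENNReal).toReal := by rw [norm_mul]
    _ = ‖d n‖ ^ (2 : ENNReal).toReal * ‖(f : ∀ _ : ℤ, ℂ) n‖ ^ (2 : ENNReal).toReal :=
        Real.mul_rpow (norm_nonneg _) (norm_nonneg _)
    _ ≤ M ^ (2 : ENNReal).toReal * ‖(f : ∀ _ : ℤ, ℂ) n‖ ^ (2 : ENNReal).toReal :=
        mul_le_mul_of_nonneg_right (Real.rpow_le_rpow (norm_nonneg _) (hd n) htwo.le)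
          (Real.rpow_nonneg (norm_nonneg _) _)

lemma diag_apply_norm (d : ℤ → ℂ) {M : ℝ} (hM : 0 ≤ M) (hd : ∀ n, ‖d n‖ ≤ M)
    (f g : H) (hg : ∀ n, (g : ∀ _ : ℤ, ℂ) n = d n * (f : ∀ _ : ℤ, ℂ) n) :
    ‖g‖ ≤ M * ‖f‖ := by
  refine lp.norm_le_of_forall_sum_le htwo (mul_nonneg hM (norm_nonneg f)) (fun s => ?_)
  calc ∑ n ∈ s, ‖(g : ∀ _ : ℤ, ℂ) n‖ ^ (2 : ENNReal).toReal
      ≤ ∑ n ∈ s, M ^ (2 : ENNReal).toReal * ‖(f : ∀ _ : ℤ, ℂ) n‖ ^ (2 : ENNReal).toReal := by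
        refine Finset.sum_le_sum (fun n _ => ?_)
        rw [hg n, norm_mul, Real.mul_rpow (norm_nonneg _) (norm_nonneg _)]
        exact mul_le_mul_of_nonneg_right (Real.rpow_le_rpow (norm_nonneg _) (hd n) htwo.le)
          (Real.rpow_nonneg (norm_nonneg _) _)
    _ = M ^ (2 : ENNReal).toReal * ∑ n ∈ s, ‖(f : ∀ _ : ℤ, ℂ) n‖ ^ (2 : ENNReal).toReal := by
        rw [Finset.mul_sum]
    _ ≤ M ^ (2 : ENNReal).toReal * ‖f‖ ^ (2 : ENNReal).toReal :=
        mul_le_mul_of_nonneg_left (lp.sum_rpow_le_norm_rpow htwo f s) (Real.rpow_nonneg hM _)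
    _ = (M * ‖f‖) ^ (2 : ENNReal).toReal := (Real.mul_rpow hM (norm_nonneg f)).symm

/-- The diagonal operator with bounded symbol `d`. -/
def diagCLM (d : ℤ → ℂ) {M : ℝ} (hM : 0 ≤ M) (hd : ∀ n, ‖d n‖ ≤ M) : H →L[ℂ] H :=
  LinearMap.mkContinuous
    { toFun := fun f => (⟨fun n => d n * (f : ∀ _ : ℤ, ℂ) n, diag_mem d hd f⟩ : H)
      map_add' := fun f g => by
        apply lp.ext
        funext n
        simp only [lp.coeFn_add, Pi.add_apply]
        ring
      map_smul' := fun c f => by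
        apply lp.ext
        funext n
        simp only [lp.coeFn_smul, Pi.smul_apply, RingHom.id_apply, smul_eq_mul]
        ring }
    M (fun f => diag_apply_norm d hM hd f _ (fun n => rfl))

@[simp] lemma diagCLM_apply (d : ℤ → ℂ) {M : ℝ} (hM : 0 ≤ M) (hd : ∀ n, ‖d n‖ ≤ M)
    (f : H) (n : ℤ) : ((diagCLM d hM hd f : H) : ∀ _ : ℤ, ℂ) n = d n * (f : ∀ _ : ℤ, ℂ) n := rfl

lemma diag_opNorm_le (T : H →L[ℂ] H) (d : ℤ → ℂ) {M : ℝ} (hM : 0 ≤ M)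
    (hd : ∀ n, ‖d n‖ ≤ M)
    (hT : ∀ (f : H) (n : ℤ), ((T f : H) : ∀ _ : ℤ, ℂ) n = d n * (f : ∀ _ : ℤ, ℂ) n) :
    ‖T‖ ≤ M :=
  T.opNorm_le_bound hM (fun f => diag_apply_norm d hM hd f (T f) (hT f))

/-- A continuous linear map with finite dimensional range is compact. -/
lemma compact_of_finiteDimensional_range {E F : Type*} [NormedAddCommGroup E]
    [NormedSpace ℂ E] [NormedAddCommGroup F] [NormedSpace ℂ F]
    (T : E →L[ℂ] F) (h : FiniteDimensional ℂ (LinearMap.range T.toLinearMap)) :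
    IsCompactOperator T := by
  haveI := h
  haveI : ProperSpace (LinearMap.range T.toLinearMap) := FiniteDimensional.proper ℂ _
  refine ⟨Subtype.val '' Metric.closedBall (0 : LinearMap.range T.toLinearMap) (‖T‖ + 1), ?_, ?_⟩
  · exact (isCompact_closedBall _ _).image continuous_subtype_val
  · filter_upwards [Metric.closedBall_mem_nhds (0 : E) one_pos] with f hf
    refine ⟨⟨T f, LinearMap.mem_range_self _ f⟩, ?_, rfl⟩
    rw [Metric.mem_closedBall, dist_zero_right]
    calc ‖(⟨T f, LinearMap.mem_range_self _ f⟩ : LinearMap.range T.toLinearMap)‖ = ‖T f‖ := rfl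
      _ ≤ ‖T‖ * ‖f‖ := T.le_opNorm f
      _ ≤ ‖T‖ * 1 := by
          have := Metric.mem_closedBall.mp hf
          rw [dist_zero_right] at this
          exact mul_le_mul_of_nonneg_left this (norm_nonneg T)
      _ ≤ ‖T‖ + 1 := by linarith [norm_nonneg T]

end DiagHelpers

open DiagHelpers

/-- the current-gap multiplier operator `(Tf)(θ) = σ₀ f₀ + Σ_{n≠0} |n|(σ_n−1) f_n e^{inθ}`,
viewed through the unitary identification of `H^{1/2}_per` and `H^{−1/2}_per` with
`ℓ²(ℤ)` (sending `f` to its weighted Fourier coefficient sequence), acts diagonally with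
symbol `d n = σ₀` for `n = 0` and `d n = σ_n − 1` for `n ≠ 0`.  Under the geometric bound
`|σ_n − 1| ≤ C ρ^{2|n|}` this diagonal operator exists as a bounded operator on `ℓ²(ℤ)`,
its symbol is rapidly decaying against every polynomial weight (so `T` maps `H^{1/2}_per`
boundedly into every `H^s_per`), it is a compact operator, and it is the operator-norm
limit of finite-rank operators. -/
theorem multiplier_operator_compact (ρ C σ₀ : ℝ) (σ : ℤ → ℝ)
    (hρ0 : 0 < ρ) (hρ1 : ρ < 1) (hC : 0 < C)
    (hσ : ∀ n : ℤ, n ≠ 0 → |σ n - 1| ≤ C * ρ ^ (2 * n.natAbs)) :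
    ∃ T : lp (fun _ : ℤ => ℂ) 2 →L[ℂ] lp (fun _ : ℤ => ℂ) 2,
      (∀ (f : lp (fun _ : ℤ => ℂ) 2) (n : ℤ),
        (T f : ∀ _ : ℤ, ℂ) n = (if n = 0 then (σ₀ : ℂ) else ((σ n - 1 : ℝ) : ℂ))
          * (f : ∀ _ : ℤ, ℂ) n) ∧
      (∀ s : ℝ, ∃ Cs > 0, ∀ n : ℤ, n ≠ 0 →
        ((n.natAbs : ℝ)) ^ s * |σ n - 1| ≤ Cs) ∧
      IsCompactOperator T ∧
      (∀ ε > 0, ∃ T' : lp (fun _ : ℤ => ℂ) 2 →L[ℂ] lp (fun _ : ℤ => ℂ) 2,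
        FiniteDimensional ℂ (LinearMap.range T'.toLinearMap) ∧ ‖T - T'‖ < ε) := by
  set d : ℤ → ℂ := fun n => if n = 0 then (σ₀ : ℂ) else ((σ n - 1 : ℝ) : ℂ) with hd_def
  have hρ2 : ρ ^ 2 < 1 := pow_lt_one₀ hρ0.le hρ1 two_ne_zero
  have hρ2' : (0:ℝ) ≤ ρ ^ 2 := sq_nonneg ρ
  have hdbound : ∀ n : ℤ, ‖d n‖ ≤ max |σ₀| C := by
    intro n
    by_cases hn : n = 0
    · simp [hd_def, hn]
    · simp only [hd_def, if_neg hn, Complex.norm_real, Real.norm_eq_abs]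
      refine le_trans (hσ n hn) (le_trans ?_ (le_max_right _ _))
      calc C * ρ ^ (2 * n.natAbs) ≤ C * 1 :=
            mul_le_mul_of_nonneg_left (pow_le_one₀ hρ0.le hρ1.le) hC.le
        _ = C := mul_one C
  have hM0 : (0:ℝ) ≤ max |σ₀| C := le_trans (abs_nonneg σ₀) (le_max_left _ _)
  -- the finite-rank approximation property
  have key : ∀ ε > 0, ∃ T' : lp (fun _ : ℤ => ℂ) 2 →L[ℂ] lp (fun _ : ℤ => ℂ) 2,
      FiniteDimensional ℂ (LinearMap.range T'.toLinearMap) ∧ ‖diagCLM d hM0 hdbound - T'‖ < ε := by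
    intro ε hε
    have htend : Filter.Tendsto (fun N : ℕ => C * (ρ ^ 2) ^ N) Filter.atTop (nhds 0) := by
      simpa using (tendsto_pow_atTop_nhds_zero_of_lt_one hρ2' hρ2).const_mul C
    obtain ⟨N, hN⟩ := (htend.eventually (gt_mem_nhds hε)).exists
    set dN : ℤ → ℂ := fun n => if n.natAbs ≤ N then d n else 0 with hdN_def
    have hdN : ∀ n, ‖dN n‖ ≤ max |σ₀| C := by
      intro n
      by_cases h : n.natAbs ≤ N
      · simpa [hdN_def, h] using hdbound n
      · simp [hdN_def, h, hM0]
    refine ⟨diagCLM dN hM0 hdN, ?_, ?_⟩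
    · -- finite rank
      set S : Finset ℤ := Finset.Icc (-(N:ℤ)) (N:ℤ) with hS_def
      have hrepr : ∀ f : lp (fun _ : ℤ => ℂ) 2, diagCLM dN hM0 hdN f =
          ∑ n ∈ S, (dN n * (f : ∀ _ : ℤ, ℂ) n) • lp.single 2 n (1:ℂ) := by
        intro f
        apply lp.ext
        funext m
        rw [lp.coeFn_sum]
        simp only [Finset.sum_apply, lp.coeFn_smul, Pi.smul_apply, lp.single_apply,
          smul_eq_mul, mul_dite, mul_zero, Finset.sum_dite_eq, Pi.single_apply, mul_ite, Finset.sum_ite_eq]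
        by_cases hm : m ∈ S
        · simp [hm, diagCLM_apply]
        · have hm' : ¬ m.natAbs ≤ N := by
            intro h
            exact hm (Finset.mem_Icc.mpr (by omega))
          simp [hm, diagCLM_apply, hdN_def, hm']
      have hle : LinearMap.range (diagCLM dN hM0 hdN).toLinearMap ≤
          Submodule.span ℂ ((fun n => lp.single 2 n (1:ℂ)) '' ↑S) := by
        rintro x hx
        obtain ⟨f, rfl⟩ := hx
        rw [ContinuousLinearMap.coe_coe, hrepr f]
        exact Submodule.sum_mem _ (fun n hn =>
          Submodule.smul_mem _ _ (Submodule.subset_span ⟨n, hn, rfl⟩))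
      have hfin : FiniteDimensional ℂ
          (Submodule.span ℂ ((fun n => lp.single 2 n (1:ℂ)) '' (↑S : Set ℤ))) :=
        FiniteDimensional.span_of_finite ℂ (Set.Finite.image (fun n => lp.single 2 n (1:ℂ)) S.finite_toSet)
      exact Submodule.finiteDimensional_of_le hle
    · -- norm bound
      have hsym : ∀ n : ℤ, ‖d n - dN n‖ ≤ C * (ρ ^ 2) ^ N := by
        intro n
        by_cases h : n.natAbs ≤ N
        · simp [hdN_def, h]
          positivity
        · have hn0 : n ≠ 0 := by
            intro h0; apply h; simp [h0]
          have : d n - dN n = d n := by simp [hdN_def, h]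
          rw [this]
          have h1 : ‖d n‖ = |σ n - 1| := by
            simp only [hd_def, if_neg hn0, Complex.norm_real, Real.norm_eq_abs]
          rw [h1]
          refine le_trans (hσ n hn0) ?_
          rw [pow_mul]
          exact mul_le_mul_of_nonneg_left
            (pow_le_pow_of_le_one hρ2' hρ2.le (by omega)) hC.le
      have hb : ‖diagCLM d hM0 hdbound - diagCLM dN hM0 hdN‖ ≤ C * (ρ ^ 2) ^ N := by
        refine diag_opNorm_le _ (fun n => d n - dN n) (by positivity) hsym ?_
        intro f n
        simp only [ContinuousLinearMap.sub_apply, lp.coeFn_sub, Pi.sub_apply,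
          diagCLM_apply]
        ring
      exact lt_of_le_of_lt hb hN
  refine ⟨diagCLM d hM0 hdbound, fun f n => rfl, ?_, ?_, key⟩
  · -- rapid decay against polynomial weights
    intro s
    set m : ℕ := ⌈s⌉₊ with hm
    have htend : Filter.Tendsto (fun k : ℕ => (k:ℝ) ^ m * (ρ ^ 2) ^ k)
        Filter.atTop (nhds 0) :=
      tendsto_pow_const_mul_const_pow_of_lt_one m hρ2' hρ2
    obtain ⟨B, hB⟩ := htend.bddAbove_range
    have hB' : ∀ k : ℕ, (k:ℝ) ^ m * (ρ ^ 2) ^ k ≤ B := fun k => hB ⟨k, rfl⟩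
    have hB0 : (0:ℝ) ≤ B := le_trans (by positivity) (hB' 1)
    refine ⟨C * B + 1, by positivity, ?_⟩
    intro n hn
    have hk1 : 1 ≤ n.natAbs := Nat.one_le_iff_ne_zero.mpr (Int.natAbs_ne_zero.mpr hn)
    have h1 : ((n.natAbs : ℝ)) ^ s ≤ (n.natAbs : ℝ) ^ (m:ℝ) :=
      Real.rpow_le_rpow_of_exponent_le (by exact_mod_cast hk1) (Nat.le_ceil s)
    have h2 : ((n.natAbs : ℝ)) ^ (m:ℝ) = (n.natAbs : ℝ) ^ m := Real.rpow_natCast _ _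
    calc ((n.natAbs : ℝ)) ^ s * |σ n - 1|
        ≤ (n.natAbs : ℝ) ^ m * (C * ρ ^ (2 * n.natAbs)) :=
          mul_le_mul (h2 ▸ h1) (hσ n hn) (abs_nonneg _) (by positivity)
      _ = C * ((n.natAbs : ℝ) ^ m * (ρ ^ 2) ^ n.natAbs) := by rw [pow_mul]; ring
      _ ≤ C * B := mul_le_mul_of_nonneg_left (hB' n.natAbs) hC.le
      _ ≤ C * B + 1 := by linarith
  · -- compactness
    have hmem : diagCLM d hM0 hdbound ∈
        closure {S : lp (fun _ : ℤ => ℂ) 2 →L[ℂ] lp (fun _ : ℤ => ℂ) 2 |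
          IsCompactOperator S} := by
      rw [Metric.mem_closure_iff]
      intro ε hε
      obtain ⟨T', hT'fin, hT'norm⟩ := key ε hε
      exact ⟨T', compact_of_finiteDimensional_range T' hT'fin, by rwa [dist_eq_norm]⟩
    exact isClosed_setOf_isCompactOperator.closure_subset hmem
end DiagHelpers
end

section
/- Let μ₁, μ₂ ∈ C(∂D) satisfy the uniform definiteness assumptions, and suppose ∫_{∂D} ∇_{∂D}φ̄ · (μ₁ − μ₂) ∇_{∂D}φ ds = 0 for all φ ∈ H¹(∂D). If additionally at some point x₀ ∈ ∂D one has −Re⟨ξ, (μ₁−μ₂)(x₀) ξ⟩ ≥ β₀|ξ|² for all ξ with some β₀ > 0, then one reaches a contradiction with the existence of a nonconstant smooth φ supported near x₀; consequently μ₁ = μ₂ on ∂D. -/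
open MeasureTheory

private lemma norm_sq_re_dot (m : ℕ) (ξ : Fin m → ℂ) :
    (dotProduct (star ξ) ξ).re = ∑ i, ‖ξ i‖^2 := by
  simp [dotProduct, Complex.re_sum, ← Complex.normSq_eq_norm_sq, Complex.normSq_apply,
    Complex.sq_norm]

private lemma dot_nonneg (m : ℕ) (ξ : Fin m → ℂ) :
    0 ≤ (dotProduct (star ξ) ξ).re := by
  rw [norm_sq_re_dot]
  exact Finset.sum_nonneg fun i _ => sq_nonneg _

private lemma quad_norm_bound (m : ℕ) (B : Matrix (Fin m) (Fin m) ℂ) (ξ : Fin m → ℂ)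
    (δ : ℝ) (hδ : 0 ≤ δ) (hB : ∀ i j, ‖B i j‖ ≤ δ) :
    ‖dotProduct (star ξ) (B.mulVec ξ)‖
      ≤ (m^2 : ℝ) * δ * (dotProduct (star ξ) ξ).re := by
  have hξ : ∀ i j : Fin m, ‖ξ i‖ * ‖ξ j‖ ≤ (dotProduct (star ξ) ξ).re := by
    intro i j
    rw [norm_sq_re_dot]
    have h1 : ‖ξ i‖ * ‖ξ j‖ ≤ (‖ξ i‖^2 + ‖ξ j‖^2) / 2 := by nlinarith [sq_nonneg (‖ξ i‖ - ‖ξ j‖)]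
    have h2 : ‖ξ i‖^2 ≤ ∑ k, ‖ξ k‖^2 :=
      Finset.single_le_sum (f := fun k => ‖ξ k‖^2) (fun k _ => sq_nonneg _) (Finset.mem_univ i)
    have h3 : ‖ξ j‖^2 ≤ ∑ k, ‖ξ k‖^2 :=
      Finset.single_le_sum (f := fun k => ‖ξ k‖^2) (fun k _ => sq_nonneg _) (Finset.mem_univ j)
    linarith
  have hrw : dotProduct (star ξ) (B.mulVec ξ)
      = ∑ i, ∑ j, (starRingEnd ℂ) (ξ i) * (B i j * ξ j) := by
    simp [dotProduct, Matrix.mulVec, Finset.mul_sum]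
  rw [hrw]
  calc ‖∑ i, ∑ j, (starRingEnd ℂ) (ξ i) * (B i j * ξ j)‖
      ≤ ∑ i, ∑ j : Fin m, ‖(starRingEnd ℂ) (ξ i) * (B i j * ξ j)‖ := by
        refine (norm_sum_le _ _).trans ?_
        exact Finset.sum_le_sum fun i _ => norm_sum_le _ _
    _ ≤ ∑ _i : Fin m, ∑ _j : Fin m, δ * (dotProduct (star ξ) ξ).re := by
        refine Finset.sum_le_sum fun i _ => Finset.sum_le_sum fun j _ => ?_
        have : ‖(starRingEnd ℂ) (ξ i) * (B i j * ξ j)‖ = ‖B i j‖ * (‖ξ i‖ * ‖ξ j‖) := by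
          simp [norm_mul]; ring
        rw [this]
        exact mul_le_mul (hB i j) (hξ i j) (mul_nonneg (norm_nonneg _) (norm_nonneg _)) hδ
    _ = (m^2 : ℝ) * δ * (dotProduct (star ξ) ξ).re := by
        simp [Finset.sum_const]; ring

private lemma dot_split (m : ℕ) (M N : Matrix (Fin m) (Fin m) ℂ) (ξ : Fin m → ℂ) :
    dotProduct (star ξ) (M.mulVec ξ)
      = dotProduct (star ξ) (N.mulVec ξ)
        + dotProduct (star ξ) ((M - N).mulVec ξ) := by
  rw [Matrix.sub_mulVec, dotProduct_sub]
  ring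

/-- core of the uniqueness argument for the coefficient `μ`: `S` plays
the role of the closed `C²` surface `∂D` with its surface measure `σm`, `G φ` denotes
the surface gradient `∇_{∂D} φ` of a test function `φ`, and `TestFuns` the test class
`H¹(∂D)` (containing, for every nonempty open subset, a smooth compactly supported
function with nonvanishing gradient).  If the quadratic form
`∫_{∂D} ∇_{∂D}φ̄ · (μ₁ − μ₂) ∇_{∂D}φ ds` vanishes for all test functions, and whenever
`μ₁ ≠ μ₂` there is (WLOG) a point `x₀` at which `−Re⟨ξ, (μ₁−μ₂)(x₀)ξ⟩ ≥ β₀|ξ|²` for some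
`β₀ > 0`, then `μ₁ = μ₂` on `∂D`. -/
theorem mu_uniqueness_core
    {S : Type*} [TopologicalSpace S] [MeasurableSpace S] [BorelSpace S]
    (σm : Measure S) [σm.IsOpenPosMeasure] (m : ℕ)
    (μ₁ μ₂ : S → Matrix (Fin m) (Fin m) ℂ)
    (hμ₁cont : Continuous μ₁) (hμ₂cont : Continuous μ₂)
    (G : (S → ℂ) → S → (Fin m → ℂ))
    (TestFuns : Set (S → ℂ))
    (hInt : ∀ φ ∈ TestFuns,
      Integrable (fun s => dotProduct (star (G φ s)) ((μ₁ s - μ₂ s).mulVec (G φ s))) σm)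
    (hQ : ∀ φ ∈ TestFuns,
      ∫ s, dotProduct (star (G φ s)) ((μ₁ s - μ₂ s).mulVec (G φ s)) ∂σm = 0)
    (hTest : ∀ U : Set S, IsOpen U → U.Nonempty →
      ∃ φ ∈ TestFuns, (∀ s ∉ U, G φ s = 0) ∧ ¬ (∀ᵐ s ∂σm, G φ s = 0))
    (hdicho : μ₁ ≠ μ₂ → ∃ x₀ : S, ∃ β₀ > (0 : ℝ), ∀ ξ : Fin m → ℂ,
      β₀ * (dotProduct (star ξ) ξ).re
        ≤ - (dotProduct (star ξ) ((μ₁ x₀ - μ₂ x₀).mulVec ξ)).re) :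
    μ₁ = μ₂ := by
  by_contra hne
  obtain ⟨x₀, β₀, hβ₀, hdef⟩ := hdicho hne
  set A : S → Matrix (Fin m) (Fin m) ℂ := fun s => μ₁ s - μ₂ s with hAdef
  have hAcont : Continuous A := hμ₁cont.sub hμ₂cont
  set δ : ℝ := β₀ / (2 * (m^2 + 1)) with hδdef
  have hδpos : 0 < δ := by positivity
  have hm2δ : (m^2 : ℝ) * δ ≤ β₀ / 2 := by
    rw [hδdef, ← mul_div_assoc, div_le_div_iff₀ (by positivity) (by norm_num)]
    have h0 : (0:ℝ) ≤ (m:ℝ)^2 := by positivity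
    nlinarith
  set U : Set S := ⋂ p : Fin m × Fin m, {x | ‖A x p.1 p.2 - A x₀ p.1 p.2‖ < δ} with hUdef
  have hUopen : IsOpen U := by
    refine isOpen_iInter_of_finite fun p => ?_
    have hc : Continuous fun x => ‖A x p.1 p.2 - A x₀ p.1 p.2‖ := by
      have h1 : Continuous fun x => A x p.1 p.2 :=
        (continuous_apply p.2).comp ((continuous_apply p.1).comp hAcont)
      exact (h1.sub continuous_const).norm
    exact isOpen_lt hc continuous_const
  have hx₀U : x₀ ∈ U := by
    simp only [hUdef, Set.mem_iInter, Set.mem_setOf_eq]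
    intro p
    simpa using hδpos
  -- key pointwise bound on U
  have key : ∀ x ∈ U, ∀ ξ : Fin m → ℂ,
      (β₀/2) * (dotProduct (star ξ) ξ).re
        ≤ - (dotProduct (star ξ) ((A x).mulVec ξ)).re := by
    intro x hx ξ
    have hBentry : ∀ i j, ‖(A x - A x₀) i j‖ ≤ δ := by
      intro i j
      have := Set.mem_iInter.mp hx (i, j)
      simpa [Matrix.sub_apply] using le_of_lt this
    have hd := quad_norm_bound m (A x - A x₀) ξ δ hδpos.le hBentry
    have hsplit := dot_split m (A x) (A x₀) ξ
    have hre : (dotProduct (star ξ) (((A x - A x₀)).mulVec ξ)).re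
        ≤ (m^2 : ℝ) * δ * (dotProduct (star ξ) ξ).re :=
      (Complex.re_le_norm _).trans hd
    have hdef' := hdef ξ
    have hnn := dot_nonneg m ξ
    have hle : (m^2 : ℝ) * δ * (dotProduct (star ξ) ξ).re
        ≤ (β₀/2) * (dotProduct (star ξ) ξ).re :=
      mul_le_mul_of_nonneg_right hm2δ hnn
    rw [hsplit]
    simp only [Complex.add_re]
    linarith
  obtain ⟨φ, hφT, hsupp, hnae⟩ := hTest U hUopen ⟨x₀, hx₀U⟩
  exfalso; apply hnae
  set f : S → ℂ := fun s => dotProduct (star (G φ s)) ((A s).mulVec (G φ s)) with hfdef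
  have hfi : Integrable f σm := hInt φ hφT
  have hf0 : ∫ s, f s ∂σm = 0 := hQ φ hφT
  have hnn : ∀ s, 0 ≤ -(f s).re := by
    intro s
    by_cases hs : s ∈ U
    · have := key s hs (G φ s)
      have h2 := dot_nonneg m (G φ s)
      nlinarith
    · simp [hfdef, hsupp s hs]
  have hgi : Integrable (fun s => -(f s).re) σm := hfi.re.neg
  have hg0 : ∫ s, -(f s).re ∂σm = 0 := by
    have h := integral_re hfi
    simp only [RCLike.re_to_complex] at h
    rw [integral_neg, h, hf0]
    simp
  have hae : (fun s => -(f s).re) =ᵐ[σm] 0 :=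
    (integral_eq_zero_iff_of_nonneg hnn hgi).mp hg0
  filter_upwards [hae] with s hs
  by_cases hU : s ∈ U
  · have hk := key s hU (G φ s)
    have hzero : -(f s).re = 0 := hs
    have hnn2 := dot_nonneg m (G φ s)
    have hdot0 : (dotProduct (star (G φ s)) (G φ s)).re = 0 := by nlinarith
    rw [norm_sq_re_dot] at hdot0
    funext i
    have := (Finset.sum_eq_zero_iff_of_nonneg (fun k _ => sq_nonneg ‖G φ s k‖)).mp hdot0 i
        (Finset.mem_univ i)
    have : ‖G φ s i‖ = 0 := by nlinarith [this]
    simpa using this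
  · exact hsupp s hU
end
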